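/- Let A ∈ L¹(ℝᵈ) and let u be a bounded continuous function on ℝᵈ. For a family 𝓕 of d_u-dimensional C¹ submanifolds of ℝᵈ that is closed under translations (i.e., F ∈ 𝓕 and x ∈ ℝᵈ imply F + x ∈ 𝓕), define ‖u‖_{L¹(𝓕)} = sup_{F∈𝓕} ∫_F |u| dμ_F, where μ_F is the induced Riemannian volume on F. Then the convolution satisfies ‖A ∗ u‖_{L¹(𝓕)} ≤ ‖A‖_{L¹} · ‖u‖_{L¹(𝓕)}. -/

import Mathlib

open MeasureTheory Filter
open scoped ENNReal NNReal Topology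

/-- Dyadic rounding converges: `⌊2ⁿ t⌋ / 2ⁿ → t`. -/
lemma dyadic_tendsto (t : ℝ) :
    Tendsto (fun n : ℕ => ((⌊(2:ℝ)^n * t⌋ : ℝ) / (2:ℝ)^n)) atTop (𝓝 t) := by
  have h2 : ∀ n : ℕ, (0:ℝ) < (2:ℝ)^n := fun n => by positivity
  have hlow : ∀ n : ℕ, t - ((1:ℝ)/2)^n ≤ (⌊(2:ℝ)^n * t⌋ : ℝ) / (2:ℝ)^n := by
    intro n
    rw [sub_le_iff_le_add, div_add' _ _ _ (h2 n).ne', le_div_iff₀ (h2 n)]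
    have h1 := Int.sub_one_lt_floor ((2:ℝ)^n * t)
    have h12 : ((1:ℝ)/2)^n * (2:ℝ)^n = 1 := by
      rw [← mul_pow]; norm_num
    nlinarith [h1]
  have hup : ∀ n : ℕ, (⌊(2:ℝ)^n * t⌋ : ℝ) / (2:ℝ)^n ≤ t := by
    intro n
    rw [div_le_iff₀ (h2 n)]
    have := Int.floor_le ((2:ℝ)^n * t)
    linarith
  have hl : Tendsto (fun n : ℕ => t - ((1:ℝ)/2)^n) atTop (𝓝 t) := by
    have : Tendsto (fun n : ℕ => ((1:ℝ)/2)^n) atTop (𝓝 0) := by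
      apply tendsto_pow_atTop_nhds_zero_of_lt_one <;> norm_num
    simpa using tendsto_const_nhds.sub this
  exact tendsto_of_tendsto_of_tendsto_of_le_of_le hl tendsto_const_nhds hlow hup

/-- For `A ∈ L¹(ℝᵈ)` and a bounded continuous `u`, and a family `𝓕` of
submanifolds closed under translations with translation-equivariant induced volumes `μ F`,
the convolution satisfies `‖A ∗ u‖_{L¹(𝓕)} ≤ ‖A‖_{L¹} ‖u‖_{L¹(𝓕)}`. -/
theorem stmt0 {d : ℕ}
    (𝓕 : Set (Set (EuclideanSpace ℝ (Fin d))))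
    (μ : Set (EuclideanSpace ℝ (Fin d)) → Measure (EuclideanSpace ℝ (Fin d)))
    (htrans : ∀ F ∈ 𝓕, ∀ x : EuclideanSpace ℝ (Fin d), (fun y => y + x) '' F ∈ 𝓕)
    (hμtrans : ∀ F ∈ 𝓕, ∀ x : EuclideanSpace ℝ (Fin d),
      μ ((fun y => y + x) '' F) = Measure.map (fun y => y + x) (μ F))
    (A : EuclideanSpace ℝ (Fin d) → ℝ) (hA : Integrable A)
    (u : EuclideanSpace ℝ (Fin d) → ℝ) (hu : Continuous u)
    (hub : ∃ M, ∀ x, |u x| ≤ M) :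
    (⨆ F ∈ 𝓕, ∫⁻ x, ENNReal.ofReal (abs (∫ y, A y * u (x - y))) ∂(μ F))
      ≤ (∫⁻ y, (‖A y‖₊ : ℝ≥0∞)) *
        ⨆ F ∈ 𝓕, ∫⁻ x, ENNReal.ofReal (abs (u x)) ∂(μ F) := by
  classical
  obtain ⟨M, hM⟩ := hub
  set S : ℝ≥0∞ := ⨆ F ∈ 𝓕, ∫⁻ x, ENNReal.ofReal (abs (u x)) ∂(μ F) with hS
  -- measurable representative of A
  set A' : EuclideanSpace ℝ (Fin d) → ℝ := hA.1.mk A with hA'def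
  have hA'meas : StronglyMeasurable A' := hA.1.stronglyMeasurable_mk
  have hAA' : A =ᵐ[volume] A' := hA.1.ae_eq_mk
  have hAint : (∫⁻ y, (‖A y‖₊ : ℝ≥0∞)) = ∫⁻ y, (‖A' y‖₊ : ℝ≥0∞) := by
    apply lintegral_congr_ae
    filter_upwards [hAA'] with y hy
    rw [hy]
  have hdens : Measurable fun y : EuclideanSpace ℝ (Fin d) => (‖A' y‖₊ : ℝ≥0∞) :=
    measurable_coe_nnreal_ennreal.comp hA'meas.measurable.nnnorm
  -- the finite measure ρ = |A| dy
  set ρ : Measure (EuclideanSpace ℝ (Fin d)) :=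
    volume.withDensity (fun y => (‖A' y‖₊ : ℝ≥0∞)) with hρdef
  have hρuniv : ρ Set.univ = ∫⁻ y, (‖A y‖₊ : ℝ≥0∞) := by
    rw [hρdef, withDensity_apply _ MeasurableSet.univ, Measure.restrict_univ, hAint]
  have hρfin : IsFiniteMeasure ρ := by
    constructor
    rw [hρuniv]
    exact hA.2
  have humeas : Measurable u := hu.measurable
  -- pointwise domination of convolution by ∫ |u(x-y)| dρ(y)
  have step1 : ∀ x : EuclideanSpace ℝ (Fin d),
      ENNReal.ofReal (abs (∫ y, A y * u (x - y)))
        ≤ ∫⁻ y, ENNReal.ofReal (abs (u (x - y))) ∂ρ := by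
    intro x
    have h1 : (∫ y, A y * u (x - y)) = ∫ y, A' y * u (x - y) := by
      apply integral_congr_ae
      filter_upwards [hAA'] with y hy
      rw [hy]
    have hfx : Measurable fun y : EuclideanSpace ℝ (Fin d) =>
        ENNReal.ofReal (abs (u (x - y))) :=
      ENNReal.measurable_ofReal.comp (humeas.comp (measurable_const.sub measurable_id)).abs
    have hwd : (∫⁻ y, ENNReal.ofReal (abs (u (x - y))) ∂ρ)
        = ∫⁻ y, (‖A' y‖₊ : ℝ≥0∞) * ENNReal.ofReal (abs (u (x - y))) := by
      rw [hρdef, lintegral_withDensity_eq_lintegral_mul volume hdens hfx]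
      rfl
    rw [h1, hwd]
    calc ENNReal.ofReal (abs (∫ y, A' y * u (x - y)))
        = (‖∫ y, A' y * u (x - y)‖₊ : ℝ≥0∞) := by
          exact (Real.enorm_eq_ofReal_abs _).symm
      _ ≤ ∫⁻ y, (‖A' y * u (x - y)‖₊ : ℝ≥0∞) := enorm_integral_le_lintegral_enorm _
      _ = ∫⁻ y, (‖A' y‖₊ : ℝ≥0∞) * ENNReal.ofReal (abs (u (x - y))) := by
          apply lintegral_congr fun y => ?_
          rw [nnnorm_mul, ENNReal.coe_mul]
          congr 1
          exact Real.enorm_eq_ofReal_abs _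
  refine iSup₂_le fun F hF => ?_
  -- translation bound
  have hinner : ∀ y : EuclideanSpace ℝ (Fin d),
      (∫⁻ x, ENNReal.ofReal (abs (u (x - y))) ∂(μ F)) ≤ S := by
    intro y
    have hG : (fun z => z + (-y)) '' F ∈ 𝓕 := htrans F hF (-y)
    have hμG := hμtrans F hF (-y)
    have hf : Measurable fun z : EuclideanSpace ℝ (Fin d) => ENNReal.ofReal (abs (u z)) :=
      ENNReal.measurable_ofReal.comp humeas.abs
    have hg : Measurable fun z : EuclideanSpace ℝ (Fin d) => z + (-y) :=
      measurable_add_const (-y)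
    have hmap : (∫⁻ z, ENNReal.ofReal (abs (u z)) ∂(μ ((fun z => z + (-y)) '' F)))
        = ∫⁻ x, ENNReal.ofReal (abs (u (x - y))) ∂(μ F) := by
      rw [hμG, lintegral_map hf hg]
      simp only [sub_eq_add_neg]
    rw [← hmap, hS]
    exact le_iSup₂_of_le _ hG le_rfl
  -- dyadic discretization
  set r : ℕ → EuclideanSpace ℝ (Fin d) → (Fin d → ℤ) :=
    fun n y i => ⌊(2:ℝ)^n * y i⌋ with hrdef
  set p : ℕ → (Fin d → ℤ) → EuclideanSpace ℝ (Fin d) :=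
    fun n k => WithLp.toLp 2 (fun i => ((k i : ℝ) / (2:ℝ)^n) : Fin d → ℝ) with hpdef
  set q : ℕ → EuclideanSpace ℝ (Fin d) → EuclideanSpace ℝ (Fin d) :=
    fun n y => p n (r n y) with hqdef
  have hproj : ∀ i : Fin d, Measurable fun y : EuclideanSpace ℝ (Fin d) => y i :=
    fun i => (measurable_pi_apply i).comp (WithLp.measurable_ofLp 2 _)
  have hrmeas : ∀ n, Measurable (r n) := by
    intro n
    apply measurable_pi_lambda
    intro i
    exact Int.measurable_floor.comp ((hproj i).const_mul _)
  have hqmeas : ∀ n, Measurable (q n) :=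
    fun n => (measurable_of_countable (p n)).comp (hrmeas n)
  have hqtend : ∀ y : EuclideanSpace ℝ (Fin d), Tendsto (fun n => q n y) atTop (𝓝 y) := by
    intro y
    have h : Tendsto (fun n => (fun i => ((r n y i : ℝ) / (2:ℝ)^n) : Fin d → ℝ)) atTop
        (𝓝 (WithLp.ofLp y)) := by
      apply tendsto_pi_nhds.mpr
      intro i
      exact dyadic_tendsto (y i)
    exact ((PiLp.continuous_toLp 2 _).tendsto _).comp h
  -- cubes
  set cube : ℕ → (Fin d → ℤ) → Set (EuclideanSpace ℝ (Fin d)) :=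
    fun n k => r n ⁻¹' {k} with hcubedef
  have hcubemeas : ∀ n k, MeasurableSet (cube n k) :=
    fun n k => (hrmeas n) (measurableSet_singleton k)
  have hcubedisj : ∀ n, Pairwise (Function.onFun Disjoint (cube n)) := by
    intro n k l hkl
    apply Set.disjoint_left.mpr
    intro y hyk hyl
    exact hkl ((Set.mem_preimage.mp hyk).symm.trans (Set.mem_preimage.mp hyl))
  have hcubeuniv : ∀ n, (⋃ k, cube n k) = Set.univ := by
    intro n
    apply Set.eq_univ_of_forall
    intro y
    exact Set.mem_iUnion.mpr ⟨r n y, rfl⟩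
  have hcubesum : ∀ n, (∑' k : Fin d → ℤ, ρ (cube n k)) = ρ Set.univ := by
    intro n
    rw [← measure_iUnion (hcubedisj n) (hcubemeas n), hcubeuniv n]
  -- approximations
  set H : EuclideanSpace ℝ (Fin d) → ℝ≥0∞ :=
    fun x => ∫⁻ y, ENNReal.ofReal (abs (u (x - y))) ∂ρ with hHdef
  set G : ℕ → EuclideanSpace ℝ (Fin d) → ℝ≥0∞ :=
    fun n x => ∑' k : Fin d → ℤ,
      ρ (cube n k) * ENNReal.ofReal (abs (u (x - p n k))) with hGdef
  have hGmeas : ∀ n, Measurable (G n) := by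
    intro n
    apply Measurable.ennreal_tsum
    intro k
    exact (ENNReal.measurable_ofReal.comp
      (humeas.comp (measurable_id.sub_const (p n k))).abs).const_mul _
  -- G n x as an integral
  have hGeq : ∀ n, ∀ x : EuclideanSpace ℝ (Fin d),
      G n x = ∫⁻ y, ENNReal.ofReal (abs (u (x - q n y))) ∂ρ := by
    intro n x
    have hpt : ∀ y : EuclideanSpace ℝ (Fin d), ENNReal.ofReal (abs (u (x - q n y)))
        = ∑' k : Fin d → ℤ, (cube n k).indicator
            (fun _ => ENNReal.ofReal (abs (u (x - p n k)))) y := by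
      intro y
      rw [tsum_eq_single (r n y) ?_]
      · rw [Set.indicator_of_mem (by exact rfl : y ∈ cube n (r n y))]
      · intro k hk
        rw [Set.indicator_of_notMem]
        intro hy
        exact hk (Set.mem_singleton_iff.mp (Set.mem_preimage.mp hy)).symm
    calc G n x = ∑' k : Fin d → ℤ, ∫⁻ y, (cube n k).indicator
          (fun _ => ENNReal.ofReal (abs (u (x - p n k)))) y ∂ρ := by
          apply tsum_congr fun k => ?_
          rw [lintegral_indicator (hcubemeas n k), setLIntegral_const, mul_comm]
      _ = ∫⁻ y, ∑' k : Fin d → ℤ, (cube n k).indicator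
            (fun _ => ENNReal.ofReal (abs (u (x - p n k)))) y ∂ρ := by
          rw [lintegral_tsum]
          intro k
          exact (AEMeasurable.indicator aemeasurable_const (hcubemeas n k))
      _ = ∫⁻ y, ENNReal.ofReal (abs (u (x - q n y))) ∂ρ := by
          apply lintegral_congr fun y => (hpt y).symm
  -- pointwise convergence G n x → H x
  have hGtend : ∀ x : EuclideanSpace ℝ (Fin d),
      Tendsto (fun n => G n x) atTop (𝓝 (H x)) := by
    intro x
    have := hρfin
    simp only [fun n => hGeq n x]
    apply tendsto_lintegral_of_dominated_convergence
      (bound := fun _ => ENNReal.ofReal M)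
    · intro n
      exact ENNReal.measurable_ofReal.comp
        (humeas.comp (measurable_const.sub (hqmeas n))).abs
    · intro n
      filter_upwards with y
      exact ENNReal.ofReal_le_ofReal (hM _)
    · rw [lintegral_const]
      exact ENNReal.mul_ne_top ENNReal.ofReal_ne_top (measure_ne_top ρ _)
    · filter_upwards with y
      have h1 : Tendsto (fun n => x - q n y) atTop (𝓝 (x - y)) :=
        tendsto_const_nhds.sub (hqtend y)
      exact (ENNReal.continuous_ofReal.tendsto _).comp
        (((continuous_abs.comp hu).tendsto _).comp h1)
  -- integral of G n against μ F is bounded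
  have hGbound : ∀ n, (∫⁻ x, G n x ∂(μ F)) ≤ ρ Set.univ * S := by
    intro n
    have hterm : ∀ k : Fin d → ℤ, Measurable fun x : EuclideanSpace ℝ (Fin d) =>
        ρ (cube n k) * ENNReal.ofReal (abs (u (x - p n k))) := by
      intro k
      exact (ENNReal.measurable_ofReal.comp
        (humeas.comp (measurable_id.sub_const (p n k))).abs).const_mul _
    calc (∫⁻ x, G n x ∂(μ F))
        = ∑' k : Fin d → ℤ,
            ∫⁻ x, ρ (cube n k) * ENNReal.ofReal (abs (u (x - p n k))) ∂(μ F) := by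
          rw [hGdef, lintegral_tsum fun k => (hterm k).aemeasurable]
      _ = ∑' k : Fin d → ℤ,
            ρ (cube n k) * ∫⁻ x, ENNReal.ofReal (abs (u (x - p n k))) ∂(μ F) := by
          apply tsum_congr fun k => ?_
          exact lintegral_const_mul _ (ENNReal.measurable_ofReal.comp
            (humeas.comp (measurable_id.sub_const (p n k))).abs)
      _ ≤ ∑' k : Fin d → ℤ, ρ (cube n k) * S :=
          ENNReal.tsum_le_tsum fun k => mul_le_mul_right (hinner (p n k)) _
      _ = (∑' k : Fin d → ℤ, ρ (cube n k)) * S := ENNReal.tsum_mul_right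
      _ = ρ Set.univ * S := by rw [hcubesum n]
  -- conclude by Fatou
  calc (∫⁻ x, ENNReal.ofReal (abs (∫ y, A y * u (x - y))) ∂(μ F))
      ≤ ∫⁻ x, H x ∂(μ F) := lintegral_mono step1
    _ = ∫⁻ x, liminf (fun n => G n x) atTop ∂(μ F) := by
        apply lintegral_congr fun x => ((hGtend x).liminf_eq).symm
    _ ≤ liminf (fun n => ∫⁻ x, G n x ∂(μ F)) atTop := lintegral_liminf_le hGmeas
    _ ≤ ρ Set.univ * S :=
        liminf_le_of_frequently_le' (Frequently.of_forall hGbound)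
    _ = (∫⁻ y, (‖A y‖₊ : ℝ≥0∞)) * S := by rw [hρuniv]
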